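/- Let H be a real Hilbert space, μ a nonatomic Borel probability measure on H, and u ∈ H with ‖u‖ < 1. If Q* minimizes g(Q) = E[‖Q − X‖ − ‖X‖] − ⟨u, Q⟩ over H, and E[1/‖Q* − X‖] < ∞, then Q* satisfies the first-order condition E[(Q* − X)/‖Q* − X‖] = u, i.e., the spatial distribution at Q* equals u. -/

import Mathlib

open MeasureTheory

lemma aux_hasFDerivAt_norm {H : Type*} [NormedAddCommGroup H] [InnerProductSpace ℝ H]
    {y : H} (hy : y ≠ 0) :
    HasFDerivAt (fun z : H => ‖z‖) (innerSL ℝ (‖y‖⁻¹ • y)) y := by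
  have h1 : HasFDerivAt (fun z : H => (inner ℝ z z : ℝ))
      ((fderivInnerCLM ℝ (y, y)).comp ((ContinuousLinearMap.id ℝ H).prod
        (ContinuousLinearMap.id ℝ H))) y :=
    (hasFDerivAt_id y).inner ℝ (hasFDerivAt_id y)
  have hpos : (0:ℝ) < inner ℝ y y := by
    rw [real_inner_self_eq_norm_sq]
    exact pow_pos (norm_pos_iff.2 hy) 2
  have h2 : HasDerivAt Real.sqrt (1 / (2 * Real.sqrt (inner ℝ y y))) (inner ℝ y y : ℝ) :=
    Real.hasDerivAt_sqrt hpos.ne'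
  have h3 := HasDerivAt.comp_hasFDerivAt (f := fun z : H => (inner ℝ z z : ℝ)) y h2 h1
  have heq : (fun z : H => Real.sqrt (inner ℝ z z)) = fun z : H => ‖z‖ := by
    funext z
    rw [real_inner_self_eq_norm_sq, Real.sqrt_sq (norm_nonneg z)]
  rw [show (Real.sqrt ∘ fun z : H => (inner ℝ z z : ℝ)) = fun z : H => ‖z‖ from heq] at h3
  convert h3 using 1
  · rfl
  · rfl
  ext v
  simp only [innerSL_apply_apply, ContinuousLinearMap.coe_smul', Pi.smul_apply,
    ContinuousLinearMap.coe_comp', Function.comp_apply, ContinuousLinearMap.prod_apply,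
    ContinuousLinearMap.coe_id', id_eq, fderivInnerCLM_apply, real_inner_smul_left]
  rw [real_inner_self_eq_norm_sq, Real.sqrt_sq (norm_nonneg y), real_inner_comm]
  have : ‖y‖ ≠ 0 := norm_ne_zero_iff.2 hy
  field_simp
  simp only [smul_eq_mul]
  field_simp
  ring

/-- First-order condition for the spatial `u`-quantile: if `Q*` minimizes
`g(Q) = E[‖Q − X‖ − ‖X‖] − ⟨u, Q⟩` over a Hilbert space, `μ` is nonatomic and
`E[1/‖Q* − X‖] < ∞`, then the spatial distribution at `Q*` equals `u`. -/
theorem spatial_quantile_first_order_condition {H : Type*} [NormedAddCommGroup H]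
    [InnerProductSpace ℝ H] [CompleteSpace H] [MeasurableSpace H] [BorelSpace H]
    [SecondCountableTopology H] (μ : Measure H) [IsProbabilityMeasure μ]
    (hna : ∀ x : H, μ {x} = 0)
    (u : H) (hu : ‖u‖ < 1)
    (g : H → ℝ)
    (hg : ∀ Q, g Q = (∫ x, (‖Q - x‖ - ‖x‖) ∂μ) - @inner ℝ H _ u Q)
    (Qstar : H) (hmin : IsMinOn g Set.univ Qstar)
    (hint : Integrable (fun x => ‖Qstar - x‖⁻¹) μ) :
    (∫ x, ‖Qstar - x‖⁻¹ • (Qstar - x) ∂μ) = u := by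
  set s : H → H := fun x => ‖Qstar - x‖⁻¹ • (Qstar - x) with hs
  have hsm : AEStronglyMeasurable s μ := by
    apply Measurable.aestronglyMeasurable
    exact ((measurable_const.sub measurable_id).norm.inv).smul
      (measurable_const.sub measurable_id)
  have hsb : ∀ x, ‖s x‖ ≤ 1 := by
    intro x
    rcases eq_or_ne x Qstar with h | h
    · simp [hs, h]
    · have hne : Qstar - x ≠ 0 := sub_ne_zero.2 (Ne.symm h)
      have : ‖s x‖ = ‖Qstar - x‖⁻¹ * ‖Qstar - x‖ := by
        rw [hs]; rw [norm_smul, Real.norm_eq_abs, abs_of_nonneg (inv_nonneg.2 (norm_nonneg _))]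
      rw [this, inv_mul_cancel₀ (norm_ne_zero_iff.2 hne)]
  have hsint : Integrable s μ :=
    (integrable_const (1:ℝ)).mono' hsm (Filter.Eventually.of_forall fun x => by
      simpa using hsb x)
  have hae : ∀ᵐ x ∂μ, x ≠ Qstar := by
    rw [ae_iff]
    simpa using hna Qstar
  set F' : H → (H →L[ℝ] ℝ) := fun x => innerSL ℝ (s x) with hF'
  have key : Integrable F' μ ∧
      HasFDerivAt (fun Q : H => ∫ x, (‖Q - x‖ - ‖x‖) ∂μ) (∫ x, F' x ∂μ) Qstar := by
    apply hasFDerivAt_integral_of_dominated_loc_of_lip (s := Set.univ)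
      (bound := fun _ => (1:ℝ)) Filter.univ_mem
    · exact Filter.Eventually.of_forall fun Q =>
        (((continuous_const.sub continuous_id).norm.sub continuous_norm)).aestronglyMeasurable
    · apply (integrable_const ‖Qstar‖).mono'
        (((continuous_const.sub continuous_id).norm.sub continuous_norm)).aestronglyMeasurable
      refine Filter.Eventually.of_forall fun x => ?_
      simp only [id_eq, Real.norm_eq_abs]
      calc |‖Qstar - x‖ - ‖x‖| = |‖Qstar - x‖ - ‖-x‖| := by rw [norm_neg]
        _ ≤ ‖(Qstar - x) - (-x)‖ := abs_norm_sub_norm_le _ _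
        _ = ‖Qstar‖ := by congr 1; abel
    · exact (innerSL ℝ).continuous.comp_aestronglyMeasurable hsm
    · refine Filter.Eventually.of_forall fun x => ?_
      have hlip : LipschitzWith 1 (fun Q : H => ‖Q - x‖ - ‖x‖) := by
        apply LipschitzWith.of_dist_le_mul
        intro a b
        simp only [Real.dist_eq, NNReal.coe_one, one_mul]
        have he : (‖a - x‖ - ‖x‖) - (‖b - x‖ - ‖x‖) = ‖a - x‖ - ‖b - x‖ := by ring
        rw [he]
        calc |‖a - x‖ - ‖b - x‖| ≤ ‖(a - x) - (b - x)‖ := abs_norm_sub_norm_le _ _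
          _ = dist a b := by rw [dist_eq_norm]; congr 1; abel
      have hone : (Real.nnabs (1:ℝ)) = 1 := by simp
      rw [hone]
      exact hlip.lipschitzOnWith
    · exact integrable_const 1
    · refine hae.mono fun x hx => ?_
      have hne : Qstar - x ≠ 0 := sub_ne_zero.2 (Ne.symm hx)
      have h1 : HasFDerivAt (fun Q : H => Q - x) (ContinuousLinearMap.id ℝ H) Qstar :=
        (hasFDerivAt_id Qstar).sub_const x
      have h2 := (aux_hasFDerivAt_norm hne).comp Qstar h1
      have h3 : HasFDerivAt (fun Q : H => ‖Q - x‖)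
          ((innerSL ℝ (‖Qstar - x‖⁻¹ • (Qstar - x))).comp (ContinuousLinearMap.id ℝ H))
          Qstar := h2
      rw [ContinuousLinearMap.comp_id] at h3
      simpa [hF', hs] using h3.sub_const ‖x‖
  have hinner : HasFDerivAt (fun Q : H => (inner ℝ u Q : ℝ)) (innerSL ℝ u) Qstar :=
    (innerSL ℝ u).hasFDerivAt
  have hgfun : g = fun Q => (∫ x, (‖Q - x‖ - ‖x‖) ∂μ) - inner ℝ u Q := funext hg
  have hG : HasFDerivAt g ((∫ x, F' x ∂μ) - innerSL ℝ u) Qstar := by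
    rw [hgfun]; exact key.2.sub hinner
  have hloc : IsLocalMin g Qstar :=
    Filter.Eventually.of_forall fun Q => hmin (Set.mem_univ Q)
  have h0 := hloc.hasFDerivAt_eq_zero hG
  have hF'eq : (∫ x, F' x ∂μ) = innerSL ℝ u := by
    have := sub_eq_zero.1 h0
    exact this
  refine ext_inner_right ℝ fun v => ?_
  have h1 : (∫ x, F' x ∂μ) v = ∫ x, (inner ℝ (s x) v : ℝ) ∂μ := by
    rw [ContinuousLinearMap.integral_apply key.1]
    rfl
  have h2 : ∫ x, (inner ℝ (s x) v : ℝ) ∂μ = (inner ℝ (∫ x, s x ∂μ) v : ℝ) := by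
    have hc : ∀ x, (inner ℝ (s x) v : ℝ) = inner ℝ v (s x) := fun x => real_inner_comm _ _
    simp_rw [hc]
    rw [integral_inner hsint, real_inner_comm]
  have h3 : (inner ℝ (∫ x, s x ∂μ) v : ℝ) = inner ℝ u v := by
    rw [← h2, ← h1, hF'eq]
    rfl
  exact h3
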